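/- Let μ₁ = N(m₁, P₁) and μ₂ = N(m₂, P₂) be two Gaussian measures on ℝ^d where P₁ is positive definite and P₂ is positive semidefinite. Then the squared 2-Wasserstein distance satisfies W₂²(μ₁, μ₂) ≤ ‖m₁ - m₂‖² + ‖P₁ - P₂‖_F² / λ_min(P₁). -/

import Mathlib

open Matrix

open scoped ComplexOrder in
/-- The positive semidefinite square root of a positive semidefinite matrix
(the Mathlib definition of December 2024, since removed from Mathlib). -/
noncomputable def Matrix.PosSemidef.sqrt {n : Type*} [Fintype n] [DecidableEq n]
    {𝕜 : Type*} [RCLike 𝕜] {A : Matrix n n 𝕜} (hA : A.PosSemidef) : Matrix n n 𝕜 :=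
  hA.1.eigenvectorUnitary.1 * diagonal ((↑) ∘ (√·) ∘ hA.1.eigenvalues) *
  (star hA.1.eigenvectorUnitary : Matrix n n 𝕜)

section Helpers

variable {n : Type*} [Fintype n] [DecidableEq n]

lemma mySqrt_posSemidef {A : Matrix n n ℝ} (hA : A.PosSemidef) : hA.sqrt.PosSemidef := by
  unfold Matrix.PosSemidef.sqrt
  rw [Matrix.star_eq_conjTranspose]
  refine Matrix.PosSemidef.mul_mul_conjTranspose_same (Matrix.PosSemidef.diagonal ?_) _
  intro i
  simp [Real.sqrt_nonneg]

lemma mySqrt_mul_self {A : Matrix n n ℝ} (hA : A.PosSemidef) : hA.sqrt * hA.sqrt = A := by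
  have hs := hA.1.spectral_theorem
  rw [Unitary.conjStarAlgAut_apply] at hs
  have hUU : star (hA.1.eigenvectorUnitary : Matrix n n ℝ) * hA.1.eigenvectorUnitary = 1 :=
    Unitary.star_mul_self_of_mem hA.1.eigenvectorUnitary.2
  unfold Matrix.PosSemidef.sqrt
  rw [show ∀ U D V : Matrix n n ℝ, U * D * V * (U * D * V) = U * (D * (V * U) * D) * V from
    fun U D V => by simp only [Matrix.mul_assoc], hUU, Matrix.mul_one,
    Matrix.diagonal_mul_diagonal]
  conv_rhs => rw [hs]
  refine congrArg (fun X => (hA.1.eigenvectorUnitary : Matrix n n ℝ) * X *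
    star (hA.1.eigenvectorUnitary : Matrix n n ℝ)) ?_
  congr 1
  funext i
  simp [Real.mul_self_sqrt (hA.eigenvalues_nonneg i)]

lemma myTrace_nonneg {M : Matrix n n ℝ} (h : M.PosSemidef) : 0 ≤ M.trace := by
  rw [Matrix.trace]
  refine Finset.sum_nonneg fun i _ => ?_
  exact h.diag_nonneg

lemma myTrace_mul_nonneg {A B : Matrix n n ℝ} (hA : A.PosSemidef) (hB : B.PosSemidef) :
    0 ≤ (A * B).trace := by
  have hRh : (hA.sqrt)ᴴ = hA.sqrt := (mySqrt_posSemidef hA).1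
  rw [← mySqrt_mul_self hA, Matrix.mul_assoc, Matrix.trace_mul_comm]
  have := hB.mul_mul_conjTranspose_same hA.sqrt
  rw [hRh] at this
  exact myTrace_nonneg this

lemma myRayleigh {M : Matrix n n ℝ} (hM : M.IsHermitian) :
    (M - (⨅ i, hM.eigenvalues i) • (1 : Matrix n n ℝ)).PosSemidef := by
  cases isEmpty_or_nonempty n with
  | inl he =>
      constructor
      · ext i j; exact he.elim i
      · intro x
        have hx0 : x = 0 := Finsupp.ext fun i => he.elim i
        subst hx0; simp
  | inr hn =>
      set l := ⨅ i, hM.eigenvalues i with hl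
      have hU : (hM.eigenvectorUnitary : Matrix n n ℝ) *
          star (hM.eigenvectorUnitary : Matrix n n ℝ) = 1 :=
        (Matrix.mem_unitaryGroup_iff).mp hM.eigenvectorUnitary.2
      have h1 : (l • 1 : Matrix n n ℝ) =
          (hM.eigenvectorUnitary : Matrix n n ℝ) * (l • 1) *
            star (hM.eigenvectorUnitary : Matrix n n ℝ) := by
        rw [Matrix.mul_smul, mul_one, Matrix.smul_mul, hU]
      nth_rewrite 1 [hM.spectral_theorem]
      rw [Unitary.conjStarAlgAut_apply]
      rw [h1, ← Matrix.sub_mul, ← Matrix.mul_sub]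
      rw [Matrix.star_eq_conjTranspose]
      apply Matrix.PosSemidef.mul_mul_conjTranspose_same
      rw [Matrix.smul_one_eq_diagonal, Matrix.diagonal_sub]
      refine Matrix.posSemidef_diagonal_iff.mpr fun i => ?_
      have : l ≤ hM.eigenvalues i := ciInf_le (Finite.bddBelow_range _) i
      simpa using this

lemma myDotSelfNonneg (x : n → ℝ) : 0 ≤ x ⬝ᵥ x :=
  Finset.sum_nonneg fun i _ => mul_self_nonneg _

/-- If `KᵀK ⪰ l·1` with `l > 0` then `KKᵀ ⪰ l·1`. -/
lemma myFlip {K : Matrix n n ℝ} {l : ℝ} (hl : 0 < l)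
    (h : ∀ y : n → ℝ, l * (y ⬝ᵥ y) ≤ (K *ᵥ y) ⬝ᵥ (K *ᵥ y)) (x : n → ℝ) :
    l * (x ⬝ᵥ x) ≤ (Kᵀ *ᵥ x) ⬝ᵥ (Kᵀ *ᵥ x) := by
  -- K is injective hence surjective
  have hinj : Function.Injective K.mulVecLin := by
    rw [← LinearMap.ker_eq_bot, LinearMap.ker_eq_bot']
    intro y hy
    have hy' : K *ᵥ y = 0 := hy
    have := h y
    rw [hy'] at this
    simp only [zero_dotProduct] at this
    have hy0 : y ⬝ᵥ y ≤ 0 := by nlinarith [myDotSelfNonneg y]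
    exact dotProduct_self_eq_zero.mp (le_antisymm hy0 (myDotSelfNonneg y))
  have hsurj := LinearMap.injective_iff_surjective.mp hinj
  obtain ⟨y, hy⟩ := hsurj x
  have hy' : K *ᵥ y = x := hy
  subst hy'
  set u := Kᵀ *ᵥ (K *ᵥ y) with hu
  have hyu : y ⬝ᵥ u = (K *ᵥ y) ⬝ᵥ (K *ᵥ y) := by
    rw [hu, Matrix.dotProduct_mulVec, Matrix.vecMul_transpose]
  have hcs : (y ⬝ᵥ u) * (y ⬝ᵥ u) ≤ (y ⬝ᵥ y) * (u ⬝ᵥ u) := by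
    simpa [dotProduct, pow_two] using Finset.sum_mul_sq_le_sq_mul_sq Finset.univ y u
  have hp := myDotSelfNonneg y
  have hq := myDotSelfNonneg u
  have hb := h y
  rw [← hyu] at hb ⊢
  have hs' : 0 ≤ y ⬝ᵥ u := le_trans (by nlinarith [hp]) hb
  rcases eq_or_lt_of_le hs' with hb0 | hb0
  · rw [← hb0, mul_zero]; exact hq
  · have h2 : (l * (y ⬝ᵥ u)) * (y ⬝ᵥ u) ≤ (u ⬝ᵥ u) * (y ⬝ᵥ u) := by
      nlinarith [mul_le_mul_of_nonneg_left hcs hl.le, mul_le_mul_of_nonneg_right hb hq]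
    exact le_of_mul_le_mul_right h2 hb0

end Helpers

/-- Squared 2-Wasserstein distance between Gaussians `N(m₁,P₁)` and `N(m₂,P₂)`
(given by the explicit Gaussian formula
`W₂² = ‖m₁-m₂‖² + tr(P₁ + P₂ - 2 (P₁^{1/2} P₂ P₁^{1/2})^{1/2})`) is bounded by
`‖m₁ - m₂‖² + ‖P₁ - P₂‖_F² / λ_min(P₁)` when `P₁` is positive definite. -/
theorem gaussian_wasserstein_bound {d : ℕ}
    (m₁ m₂ : Fin d → ℝ) (P₁ P₂ : Matrix (Fin d) (Fin d) ℝ)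
    (hP₁ : P₁.PosDef) (hP₂ : P₂.PosSemidef)
    (hQ : (hP₁.posSemidef.sqrt * P₂ * hP₁.posSemidef.sqrt).PosSemidef) :
    (∑ i, (m₁ i - m₂ i) ^ 2) +
        Matrix.trace (P₁ + P₂ - (2 : ℝ) • hQ.sqrt) ≤
      (∑ i, (m₁ i - m₂ i) ^ 2) +
        Matrix.trace ((P₁ - P₂)ᵀ * (P₁ - P₂)) / (⨅ i, hP₁.1.eigenvalues i) := by
  rcases Nat.eq_zero_or_pos d with hd | hd
  · subst hd
    have h0 : ∀ M : Matrix (Fin 0) (Fin 0) ℝ, M.trace = 0 := fun M => by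
      simp [Matrix.trace]
    rw [h0, h0, zero_div]
  have : Nonempty (Fin d) := Fin.pos_iff_nonempty.mp hd
  set l := ⨅ i, hP₁.1.eigenvalues i with hldef
  have hl : 0 < l := by
    obtain ⟨i₀, hi₀⟩ := Finite.exists_min (fun i => hP₁.1.eigenvalues i)
    exact lt_of_lt_of_le (hP₁.eigenvalues_pos i₀) (le_ciInf hi₀)
  set R := hP₁.posSemidef.sqrt with hRdef
  have hR : R.PosSemidef := mySqrt_posSemidef hP₁.posSemidef
  have hRsym : Rᵀ = R := by
    rw [← Matrix.conjTranspose_eq_transpose_of_trivial]; exact hR.1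
  have hRR : R * R = P₁ := mySqrt_mul_self hP₁.posSemidef
  have hdet : IsUnit R.det := by
    have h2 : R.det * R.det = P₁.det := by rw [← Matrix.det_mul, hRR]
    have := hP₁.det_pos
    refine isUnit_iff_ne_zero.mpr fun h0 => ?_
    rw [h0, mul_zero] at h2
    linarith [h2 ▸ this]
  have hRinv : R⁻¹ * R = 1 := Matrix.nonsing_inv_mul R hdet
  have hRvin : R * R⁻¹ = 1 := Matrix.mul_nonsing_inv R hdet
  have hRinvT : (R⁻¹)ᵀ = R⁻¹ := by rw [Matrix.transpose_nonsing_inv, hRsym]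
  set S := hQ.sqrt with hSdef
  have hS : S.PosSemidef := mySqrt_posSemidef hQ
  have hSsym : Sᵀ = S := by
    rw [← Matrix.conjTranspose_eq_transpose_of_trivial]; exact hS.1
  have hSS : S * S = R * P₂ * R := mySqrt_mul_self hQ
  set T := R⁻¹ * S with hTdef
  have hRT : R * T = S := by rw [hTdef, ← Matrix.mul_assoc, hRvin, one_mul]
  have hTt : Tᵀ = S * R⁻¹ := by rw [hTdef, Matrix.transpose_mul, hSsym, hRinvT]
  have hTR : Tᵀ * R = S := by rw [hTt, Matrix.mul_assoc, hRinv, mul_one]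
  have hTT : T * Tᵀ = P₂ := by
    rw [hTdef, hTt]
    calc R⁻¹ * S * (S * R⁻¹) = R⁻¹ * (S * S) * R⁻¹ := by noncomm_ring
    _ = (R⁻¹ * R) * P₂ * (R * R⁻¹) := by rw [hSS]; noncomm_ring
    _ = P₂ := by rw [hRinv, hRvin, one_mul, mul_one]
  set G := R - T with hGdef
  set K := R + T with hKdef
  have hGt : Gᵀ = R - Tᵀ := by rw [hGdef, Matrix.transpose_sub, hRsym]
  have hKt : Kᵀ = R + Tᵀ := by rw [hKdef, Matrix.transpose_add, hRsym]
  -- key identities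
  have key1 : Kᵀ * G = P₁ - Tᵀ * T := by
    rw [hKt, hGdef]
    have : (R + Tᵀ) * (R - T) = R * R - R * T + Tᵀ * R - Tᵀ * T := by noncomm_ring
    rw [this, hRR, hRT, hTR]; abel
  have key1' : Gᵀ * K = P₁ - Tᵀ * T := by
    rw [hGt, hKdef]
    have : (R - Tᵀ) * (R + T) = R * R + R * T - Tᵀ * R - Tᵀ * T := by noncomm_ring
    rw [this, hRR, hRT, hTR]; abel
  have key2 : Kᵀ * K = (P₁ - l • 1) + (Tᵀ * T + (S + S)) + l • 1 := by
    rw [hKt, hKdef]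
    have : (R + Tᵀ) * (R + T) = R * R + R * T + Tᵀ * R + Tᵀ * T := by noncomm_ring
    rw [this, hRR, hRT, hTR]; abel
  have key3 : Gᵀ * G = P₁ + Tᵀ * T - (S + S) := by
    rw [hGt, hGdef]
    have : (R - Tᵀ) * (R - T) = R * R - R * T - Tᵀ * R + Tᵀ * T := by noncomm_ring
    rw [this, hRR, hRT, hTR]; abel
  have key4 : G * Kᵀ + K * Gᵀ = (P₁ - P₂) + (P₁ - P₂) := by
    rw [hGt, hKt, hGdef, hKdef]
    have : (R - T) * (R + Tᵀ) + (R + T) * (R - Tᵀ) =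
        (R * R - T * Tᵀ) + (R * R - T * Tᵀ) := by noncomm_ring
    rw [this, hRR, hTT]
  -- positivity facts
  have hTtT : (Tᵀ * T).PosSemidef := by
    have := Matrix.posSemidef_conjTranspose_mul_self T
    rwa [Matrix.conjTranspose_eq_transpose_of_trivial] at this
  have hGGt : (G * Gᵀ).PosSemidef := by
    have := Matrix.posSemidef_self_mul_conjTranspose G
    rwa [Matrix.conjTranspose_eq_transpose_of_trivial] at this
  have hGtG : (Gᵀ * G).PosSemidef := by
    have := Matrix.posSemidef_conjTranspose_mul_self G
    rwa [Matrix.conjTranspose_eq_transpose_of_trivial] at this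
  have hP1l : (P₁ - l • 1).PosSemidef := myRayleigh hP₁.1
  have hKtK : (Kᵀ * K - l • (1 : Matrix (Fin d) (Fin d) ℝ)).PosSemidef := by
    rw [key2, add_sub_cancel_right]
    exact hP1l.add (hTtT.add (hS.add hS))
  have hKKt : (K * Kᵀ - l • (1 : Matrix (Fin d) (Fin d) ℝ)).PosSemidef := by
    have hptwise : ∀ y : Fin d → ℝ, l * (y ⬝ᵥ y) ≤ (K *ᵥ y) ⬝ᵥ (K *ᵥ y) := by
      intro y
      have := hKtK.dotProduct_mulVec_nonneg y
      have hexp : star y ⬝ᵥ ((Kᵀ * K - l • 1) *ᵥ y)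
          = (K *ᵥ y) ⬝ᵥ (K *ᵥ y) - l * (y ⬝ᵥ y) := by
        rw [Matrix.sub_mulVec, dotProduct_sub, star_trivial]
        congr 1
        · rw [← Matrix.mulVec_mulVec, Matrix.dotProduct_mulVec, Matrix.vecMul_transpose]
        · rw [Matrix.smul_mulVec, Matrix.one_mulVec, dotProduct_smul,
            smul_eq_mul]
      rw [hexp] at this
      linarith
    have hflip := myFlip hl hptwise
    refine Matrix.PosSemidef.of_dotProduct_mulVec_nonneg ?_ ?_
    · have h1 : (K * Kᵀ).IsHermitian := by
        have h2 := Matrix.posSemidef_self_mul_conjTranspose K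
        rw [Matrix.conjTranspose_eq_transpose_of_trivial] at h2
        exact h2.1
      have h3 : (l • (1 : Matrix (Fin d) (Fin d) ℝ)).IsHermitian := by
        rw [Matrix.smul_one_eq_diagonal]
        exact Matrix.isHermitian_diagonal _
      exact h1.sub h3
    · intro x
      have := hflip x
      have hexp : star x ⬝ᵥ ((K * Kᵀ - l • 1) *ᵥ x)
          = (Kᵀ *ᵥ x) ⬝ᵥ (Kᵀ *ᵥ x) - l * (x ⬝ᵥ x) := by
        rw [Matrix.sub_mulVec, dotProduct_sub, star_trivial]
        congr 1
        · rw [← Matrix.mulVec_mulVec, Matrix.dotProduct_mulVec, ← Matrix.mulVec_transpose]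
        · rw [Matrix.smul_mulVec, Matrix.one_mulVec, dotProduct_smul,
            smul_eq_mul]
      rw [hexp]
      linarith
  -- trace bounds
  have tb1 : l * (Gᵀ * G).trace ≤ ((G * Gᵀ) * (K * Kᵀ)).trace := by
    have h0 : 0 ≤ ((G * Gᵀ) * (K * Kᵀ - l • 1)).trace := myTrace_mul_nonneg hGGt hKKt
    have hexp : (G * Gᵀ) * (K * Kᵀ - l • 1)
        = (G * Gᵀ) * (K * Kᵀ) - l • (G * Gᵀ) := by
      rw [Matrix.mul_sub, Matrix.mul_smul, mul_one]
    rw [hexp, Matrix.trace_sub, Matrix.trace_smul, smul_eq_mul] at h0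
    have : (G * Gᵀ).trace = (Gᵀ * G).trace := Matrix.trace_mul_comm _ _
    linarith [this ▸ h0]
  have tb2 : l * (Gᵀ * G).trace ≤ ((Gᵀ * G) * (Kᵀ * K)).trace := by
    have h0 : 0 ≤ ((Gᵀ * G) * (Kᵀ * K - l • 1)).trace := myTrace_mul_nonneg hGtG hKtK
    have hexp : (Gᵀ * G) * (Kᵀ * K - l • 1)
        = (Gᵀ * G) * (Kᵀ * K) - l • (Gᵀ * G) := by
      rw [Matrix.mul_sub, Matrix.mul_smul, mul_one]
    rw [hexp, Matrix.trace_sub, Matrix.trace_smul, smul_eq_mul] at h0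
    linarith
  -- relate the cross-term trace
  have hMsym : Gᵀ * K = Kᵀ * G := by rw [key1, key1']
  have tM : ((Kᵀ * G) * (Kᵀ * G)).trace = ((G * Gᵀ) * (K * Kᵀ)).trace := by
    calc ((Kᵀ * G) * (Kᵀ * G)).trace = ((Gᵀ * K) * (Kᵀ * G)).trace := by rw [hMsym]
    _ = (Gᵀ * (K * Kᵀ * G)).trace := by simp only [Matrix.mul_assoc]
    _ = ((K * Kᵀ * G) * Gᵀ).trace := Matrix.trace_mul_comm _ _
    _ = ((K * Kᵀ) * (G * Gᵀ)).trace := by simp only [Matrix.mul_assoc]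
    _ = ((G * Gᵀ) * (K * Kᵀ)).trace := Matrix.trace_mul_comm _ _
  -- expansion of the Frobenius norm
  have expand : ((P₁ - P₂) * (P₁ - P₂)).trace * 4
      = ((Kᵀ * G) * (Kᵀ * G)).trace * 2 + ((Gᵀ * G) * (Kᵀ * K)).trace * 2 := by
    have h2D : (G * Kᵀ + K * Gᵀ) * (G * Kᵀ + K * Gᵀ)
        = ((P₁ - P₂) + (P₁ - P₂)) * ((P₁ - P₂) + (P₁ - P₂)) := by rw [key4]
    have hRHS : (((P₁ - P₂) + (P₁ - P₂)) * ((P₁ - P₂) + (P₁ - P₂))).trace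
        = ((P₁ - P₂) * (P₁ - P₂)).trace * 4 := by
      have : ((P₁ - P₂) + (P₁ - P₂)) * ((P₁ - P₂) + (P₁ - P₂))
          = (P₁ - P₂) * (P₁ - P₂) + (P₁ - P₂) * (P₁ - P₂)
            + ((P₁ - P₂) * (P₁ - P₂) + (P₁ - P₂) * (P₁ - P₂)) := by noncomm_ring
      rw [this, Matrix.trace_add, Matrix.trace_add]; ring
    have hLHS : ((G * Kᵀ + K * Gᵀ) * (G * Kᵀ + K * Gᵀ)).trace
        = ((Kᵀ * G) * (Kᵀ * G)).trace * 2 + ((Gᵀ * G) * (Kᵀ * K)).trace * 2 := by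
      have e1 : (G * Kᵀ + K * Gᵀ) * (G * Kᵀ + K * Gᵀ)
          = (G * Kᵀ) * (G * Kᵀ) + (G * Kᵀ) * (K * Gᵀ)
            + ((K * Gᵀ) * (G * Kᵀ) + (K * Gᵀ) * (K * Gᵀ)) := by noncomm_ring
      rw [e1, Matrix.trace_add, Matrix.trace_add, Matrix.trace_add]
      have t1 : ((G * Kᵀ) * (G * Kᵀ)).trace = ((Kᵀ * G) * (Kᵀ * G)).trace := by
        calc ((G * Kᵀ) * (G * Kᵀ)).trace = (G * (Kᵀ * G * Kᵀ)).trace := by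
              simp only [Matrix.mul_assoc]
        _ = ((Kᵀ * G * Kᵀ) * G).trace := Matrix.trace_mul_comm _ _
        _ = ((Kᵀ * G) * (Kᵀ * G)).trace := by simp only [Matrix.mul_assoc]
      have t4 : ((K * Gᵀ) * (K * Gᵀ)).trace = ((Kᵀ * G) * (Kᵀ * G)).trace := by
        calc ((K * Gᵀ) * (K * Gᵀ)).trace = (K * (Gᵀ * K * Gᵀ)).trace := by
              simp only [Matrix.mul_assoc]
        _ = ((Gᵀ * K * Gᵀ) * K).trace := Matrix.trace_mul_comm _ _
        _ = ((Gᵀ * K) * (Gᵀ * K)).trace := by simp only [Matrix.mul_assoc]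
        _ = ((Kᵀ * G) * (Kᵀ * G)).trace := by rw [hMsym]
      have t2 : ((G * Kᵀ) * (K * Gᵀ)).trace = ((Gᵀ * G) * (Kᵀ * K)).trace := by
        calc ((G * Kᵀ) * (K * Gᵀ)).trace = (G * (Kᵀ * K * Gᵀ)).trace := by
              simp only [Matrix.mul_assoc]
        _ = ((Kᵀ * K * Gᵀ) * G).trace := Matrix.trace_mul_comm _ _
        _ = ((Kᵀ * K) * (Gᵀ * G)).trace := by simp only [Matrix.mul_assoc]
        _ = ((Gᵀ * G) * (Kᵀ * K)).trace := Matrix.trace_mul_comm _ _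
      have t3 : ((K * Gᵀ) * (G * Kᵀ)).trace = ((Gᵀ * G) * (Kᵀ * K)).trace := by
        calc ((K * Gᵀ) * (G * Kᵀ)).trace = (K * (Gᵀ * G * Kᵀ)).trace := by
              simp only [Matrix.mul_assoc]
        _ = ((Gᵀ * G * Kᵀ) * K).trace := Matrix.trace_mul_comm _ _
        _ = ((Gᵀ * G) * (Kᵀ * K)).trace := by simp only [Matrix.mul_assoc]
      rw [t1, t2, t3, t4]; ring
    rw [← hRHS, ← h2D, hLHS]
  -- trace of A equals trace of GᵀG
  have tA : (P₁ + P₂ - (2 : ℝ) • S).trace = (Gᵀ * G).trace := by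
    rw [key3]
    have hTtTtr : (Tᵀ * T).trace = P₂.trace := by
      rw [Matrix.trace_mul_comm, hTT]
    simp only [Matrix.trace_sub, Matrix.trace_add, Matrix.trace_smul, smul_eq_mul, hTtTtr]
    ring
  -- final assembly
  have main : l * (P₁ + P₂ - (2 : ℝ) • S).trace ≤ ((P₁ - P₂) * (P₁ - P₂)).trace := by
    rw [tA]
    have tb1' : l * (Gᵀ * G).trace ≤ ((Kᵀ * G) * (Kᵀ * G)).trace := by rw [tM]; exact tb1
    linarith [tb1', tb2, expand]
  have hDsym : (P₁ - P₂)ᵀ = P₁ - P₂ := by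
    rw [Matrix.transpose_sub]
    rw [← Matrix.conjTranspose_eq_transpose_of_trivial P₁,
      ← Matrix.conjTranspose_eq_transpose_of_trivial P₂, hP₁.1, hP₂.1]
  rw [hDsym]
  have : (P₁ + P₂ - (2 : ℝ) • S).trace ≤ ((P₁ - P₂) * (P₁ - P₂)).trace / l :=
    (le_div_iff₀ hl).mpr (by linarith [main])
  linarith
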